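/- arXiv:1910.03836 — 3 statements merged into one kernel-verified Lean document; each statement's English description precedes it below -/
import Mathlib

section
/- Let Γ be a Jordan curve in the Euclidean plane and let C be a simple continuous curve (a continuous injective image of a nondegenerate compact interval). Then Γ contains only finitely many congruent copies of C that are mutually disjoint apart from possibly their endpoints; i.e., any family of isometric images of C contained in Γ, any two of which intersect in at most common endpoints, is finite. -/
open Metric Set Complex Complex

noncomputable section

lemma myCosLip (s t : ℝ) : |Real.cos s - Real.cos t| ≤ |s - t| := by
  rw [Real.cos_sub_cos]
  have h1 : |Real.sin ((s + t) / 2)| ≤ 1 := Real.abs_sin_le_one _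
  have h2 : |Real.sin ((s - t) / 2)| ≤ |(s - t) / 2| := Real.abs_sin_le_abs
  calc |(-2) * Real.sin ((s+t)/2) * Real.sin ((s-t)/2)|
      = 2 * (|Real.sin ((s+t)/2)| * |Real.sin ((s-t)/2)|) := by
        rw [abs_mul, abs_mul]; simp [mul_assoc]
    _ ≤ 2 * (1 * |(s - t)/2|) := by
        gcongr
    _ ≤ |s - t| := by rw [abs_div]; simp; linarith [abs_nonneg (s - t)]

lemma mySinLip (s t : ℝ) : |Real.sin s - Real.sin t| ≤ |s - t| := by
  rw [Real.sin_sub_sin]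
  have h1 : |Real.cos ((s + t) / 2)| ≤ 1 := Real.abs_cos_le_one _
  have h2 : |Real.sin ((s - t) / 2)| ≤ |(s - t) / 2| := Real.abs_sin_le_abs
  calc |2 * Real.sin ((s-t)/2) * Real.cos ((s+t)/2)|
      = 2 * (|Real.sin ((s-t)/2)| * |Real.cos ((s+t)/2)|) := by
        rw [abs_mul, abs_mul]; simp [mul_assoc]
    _ ≤ 2 * (|(s - t)/2| * 1) := by gcongr
    _ ≤ |s - t| := by rw [abs_div]; simp; linarith [abs_nonneg (s - t)]

lemma myChord (s t : ℝ) : dist (Complex.exp (s * I)) (Complex.exp (t * I)) ≤ 2 * |s - t| := by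
  rw [Complex.dist_eq]
  have hre : (Complex.exp (↑s * I) - Complex.exp (↑t * I)).re = Real.cos s - Real.cos t := by
    simp [Complex.exp_ofReal_mul_I_re]
  have him : (Complex.exp (↑s * I) - Complex.exp (↑t * I)).im = Real.sin s - Real.sin t := by
    simp [Complex.exp_ofReal_mul_I_im]
  calc ‖Complex.exp (↑s * I) - Complex.exp (↑t * I)‖
      ≤ |(Complex.exp (↑s * I) - Complex.exp (↑t * I)).re| +
        |(Complex.exp (↑s * I) - Complex.exp (↑t * I)).im| := Complex.norm_le_abs_re_add_abs_im _
    _ ≤ |s - t| + |s - t| := by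
        rw [hre, him]
        exact add_le_add (myCosLip s t) (mySinLip s t)
    _ = 2 * |s - t| := by ring

lemma myExpInj {s t : ℝ} (hst : |s - t| < 2 * Real.pi)
    (h : Complex.exp (s * I) = Complex.exp (t * I)) : s = t := by
  rcases Complex.exp_eq_exp_iff_exists_int.mp h with ⟨n, hn⟩
  have hI : ((s : ℂ)) = (t : ℂ) + n * (2 * Real.pi) := by
    have : (s : ℂ) * I = ((t : ℂ) + n * (2 * Real.pi)) * I := by rw [hn]; ring
    exact mul_right_cancel₀ Complex.I_ne_zero this
  have hr : s = t + n * (2 * Real.pi) := by exact_mod_cast hI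
  have hn0 : n = 0 := by
    by_contra hne
    have h1 : (1 : ℝ) ≤ |(n : ℝ)| := by
      exact_mod_cast Int.one_le_abs (by exact_mod_cast hne : n ≠ 0)
    have : |s - t| = |(n : ℝ)| * (2 * Real.pi) := by
      have : t + (n:ℝ) * (2 * Real.pi) - t = (n:ℝ) * (2*Real.pi) := by ring
      rw [hr, this, abs_mul, abs_of_pos Real.two_pi_pos]
    nlinarith [Real.two_pi_pos]
  simp [hn0] at hr; exact hr


lemma myExpInj' (m : ℝ) {s t : ℝ} (hst : |s - t| < 2 * Real.pi)
    (h : Complex.exp ((↑m + ↑s) * I) = Complex.exp ((↑m + ↑t) * I)) : s = t := by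
  have h2 : Complex.exp (↑(m + s) * I) = Complex.exp (↑(m + t) * I) := by
    push_cast; exact h
  have h3 := myExpInj (by rwa [show (m + s) - (m + t) = s - t by ring]) h2
  linarith

lemma myNormalize {A : Set ℂ} {ρ : ℝ} (m₁ : ℝ)
    (h : ∀ t : ℝ, |t| ≤ ρ → Complex.exp ((m₁ + t) * I) ∈ A) :
    ∃ m ∈ Set.Ico 0 (2 * Real.pi), ∀ t : ℝ, |t| ≤ ρ → Complex.exp ((m + t) * I) ∈ A := by
  set k : ℤ := ⌊m₁ / (2 * Real.pi)⌋ with hk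
  refine ⟨m₁ - k * (2 * Real.pi), ⟨Int.sub_floor_div_mul_nonneg m₁ Real.two_pi_pos,
    Int.sub_floor_div_mul_lt m₁ Real.two_pi_pos⟩, ?_⟩
  intro t ht
  have h1 := h t ht
  have heq : Complex.exp ((↑(m₁ - k * (2 * Real.pi)) + ↑t) * I)
      = Complex.exp ((↑m₁ + ↑t) * I) * Complex.exp ((-k : ℤ) * (2 * Real.pi * I)) := by
    rw [← Complex.exp_add]
    congr 1
    push_cast
    ring
  rw [heq, Complex.exp_int_mul_two_pi_mul_I, mul_one]
  exact h1

lemma myArc (A : Set ℂ) (hA : A ⊆ Metric.sphere (0:ℂ) 1) (hconn : IsPreconnected A)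
    {x y : ℂ} (hx : x ∈ A) (hy : y ∈ A) {δ : ℝ} (hdist : δ ≤ dist x y) :
    ∃ m ∈ Set.Ico 0 (2 * Real.pi),
      ∀ t : ℝ, |t| ≤ δ / 4 → Complex.exp ((m + t) * I) ∈ A := by
  have habs1 : ∀ z ∈ A, ‖z‖ = 1 := by
    intro z hz
    simpa using mem_sphere_zero_iff_norm.mp (hA hz)
  by_cases hfull : Metric.sphere (0:ℂ) 1 ⊆ A
  · refine ⟨0, ⟨le_refl 0, Real.two_pi_pos⟩, fun t ht => hfull ?_⟩
    rw [mem_sphere_zero_iff_norm]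
    simp
  · obtain ⟨p, hp, hpA⟩ := not_subset.mp hfull
    have hpabs : ‖p‖ = 1 := by simpa using mem_sphere_zero_iff_norm.mp hp
    set w : ℂ := -(starRingEnd ℂ) p with hw
    have hwabs : ‖w‖ = 1 := by simp [hw, hpabs]
    have hwconj : w * (starRingEnd ℂ) w = 1 := by
      rw [Complex.mul_conj]
      norm_cast
      rw [Complex.normSq_eq_norm_sq, hwabs]; norm_num
    set B := (fun z => z * w) '' A with hB
    have hBabs : ∀ z ∈ B, ‖z‖ = 1 := by
      rintro z ⟨u, hu, rfl⟩
      rw [norm_mul, habs1 u hu, hwabs, mul_one]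
    have hBne : (-1 : ℂ) ∉ B := by
      rintro ⟨u, hu, huw⟩
      have hpconj : p * (starRingEnd ℂ) p = 1 := by
        rw [Complex.mul_conj]
        norm_cast
        rw [Complex.normSq_eq_norm_sq, hpabs]; norm_num
      have : u = p := by
        have h2 : u * (starRingEnd ℂ) p = 1 := by
          have : u * w = -1 := huw
          rw [hw] at this
          have := this
          linear_combination -this
        have h3 : u * (starRingEnd ℂ) p = p * (starRingEnd ℂ) p := by rw [h2, hpconj]
        have hcne : (starRingEnd ℂ) p ≠ 0 := by
          simp only [ne_eq, map_eq_zero]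
          intro h0
          rw [h0] at hpabs; simp at hpabs
        exact mul_right_cancel₀ hcne h3
      exact hpA (this ▸ hu)
    have hBconn : IsPreconnected B := hconn.image _ (continuous_id.mul continuous_const).continuousOn
    have hargcont : ContinuousOn Complex.arg B := by
      intro z hz
      refine (Complex.continuousAt_arg ?_).continuousWithinAt
      rw [Complex.mem_slitPlane_iff]
      by_cases him : z.im = 0
      · left
        have hn : Complex.normSq z = 1 := by
          rw [Complex.normSq_eq_norm_sq, hBabs z hz]; norm_num
        have hre : z.re * z.re = 1 := by
          have := Complex.normSq_apply z
          rw [him] at this; simp at this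
          rw [hn] at this; linarith
        rcases mul_self_eq_one_iff.mp hre with h1 | h1
        · rw [h1]; norm_num
        · exfalso
          apply hBne
          have : z = -1 := Complex.ext (by simp [h1]) (by simp [him])
          rwa [this] at hz
      · right; exact him
    have hordB : OrdConnected (Complex.arg '' B) := (hBconn.image _ hargcont).ordConnected
    have hxB : x * w ∈ B := ⟨x, hx, rfl⟩
    have hyB : y * w ∈ B := ⟨y, hy, rfl⟩
    set α := Complex.arg (x * w) with hα
    set β := Complex.arg (y * w) with hβ
    have hrec : ∀ z ∈ B, Complex.exp ((Complex.arg z : ℂ) * I) = z := by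
      intro z hz
      have h := Complex.norm_mul_exp_arg_mul_I z
      rwa [hBabs z hz, Complex.ofReal_one, one_mul] at h
    have hsubB : Set.uIcc α β ⊆ Complex.arg '' B :=
      hordB.uIcc_subset ⟨x * w, hxB, rfl⟩ ⟨y * w, hyB, rfl⟩
    -- chord-arc estimate
    have hdxy : dist (x * w) (y * w) = dist x y := by
      rw [Complex.dist_eq, Complex.dist_eq]
      have : x * w - y * w = (x - y) * w := by ring
      rw [this, norm_mul, hwabs, mul_one]
    have hchord : δ ≤ 2 * |α - β| := by
      calc δ ≤ dist x y := hdist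
        _ = dist (Complex.exp ((α : ℂ) * I)) (Complex.exp ((β : ℂ) * I)) := by
            rw [hrec _ hxB, hrec _ hyB, hdxy]
        _ ≤ 2 * |α - β| := myChord α β
    set lo := min α β with hlo
    set hi := max α β with hhi
    have hlen : hi - lo = |α - β| := by rw [abs_sub_comm]; exact max_sub_min_eq_abs α β
    set m₀ := (lo + hi) / 2 with hm₀
    have hmem : ∀ t : ℝ, |t| ≤ δ / 4 → m₀ + t ∈ Set.Icc lo hi := by
      intro t ht
      rw [abs_le] at ht
      constructor
      · have : δ / 4 ≤ (hi - lo) / 2 := by rw [hlen]; linarith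
        simp only [hm₀]; linarith
      · have : δ / 4 ≤ (hi - lo) / 2 := by rw [hlen]; linarith
        simp only [hm₀]; linarith
    have key : ∀ t : ℝ, |t| ≤ δ / 4 →
        Complex.exp ((↑(m₀ + Complex.arg ((starRingEnd ℂ) w)) + ↑t) * I) ∈ A := by
      intro t ht
      have h1 : m₀ + t ∈ Set.uIcc α β := hmem t ht
      obtain ⟨z, hz, hzarg⟩ := hsubB h1
      have hzA : z * (starRingEnd ℂ) w ∈ A := by
        obtain ⟨u, hu, rfl⟩ := hz
        have : u * w * (starRingEnd ℂ) w = u := by rw [mul_assoc, hwconj, mul_one]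
        rwa [this]
      have hcwabs : ‖(starRingEnd ℂ) w‖ = 1 := by simp [hwabs]
      have hcw : Complex.exp ((Complex.arg ((starRingEnd ℂ) w) : ℂ) * I) = (starRingEnd ℂ) w := by
        have h := Complex.norm_mul_exp_arg_mul_I ((starRingEnd ℂ) w)
        rwa [hcwabs, Complex.ofReal_one, one_mul] at h
      have hze : Complex.exp ((↑(m₀ + t) : ℂ) * I) = z := by
        rw [← hzarg]; exact hrec z hz
      have hsplit : Complex.exp ((↑(m₀ + Complex.arg ((starRingEnd ℂ) w)) + ↑t) * I)
          = Complex.exp ((↑(m₀ + t) : ℂ) * I) *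
            Complex.exp ((Complex.arg ((starRingEnd ℂ) w) : ℂ) * I) := by
        rw [← Complex.exp_add]
        congr 1
        push_cast
        ring
      rw [hsplit, hze, hcw]
      exact hzA
    exact myNormalize (m₀ + Complex.arg ((starRingEnd ℂ) w)) key


set_option maxHeartbeats 1000000 in
/-- Let `Γ` be a Jordan curve (a homeomorphic image of the circle) and
let `C = c '' [a,b]` be a simple continuous curve. Any family of congruent (isometric)
copies of `C` contained in `Γ`, any two of which intersect in at most common endpoints,
is finite. -/
theorem finitely_many_disjoint_congruent_copies_in_jordan_curve
    (Γ : Set ℂ) (hΓ : Nonempty (Γ ≃ₜ Metric.sphere (0:ℂ) 1))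
    (a b : ℝ) (hab : a < b) (c : ℝ → ℂ)
    (hc : ContinuousOn c (Set.Icc a b)) (hinj : Set.InjOn c (Set.Icc a b))
    (F : Set (ℂ ≃ᵢ ℂ))
    (hsub : ∀ f ∈ F, f '' (c '' Set.Icc a b) ⊆ Γ)
    (hdisj : ∀ f ∈ F, ∀ g ∈ F,
      f '' (c '' Set.Icc a b) ≠ g '' (c '' Set.Icc a b) →
      (f '' (c '' Set.Icc a b)) ∩ (g '' (c '' Set.Icc a b)) ⊆
        ({f (c a), f (c b)} : Set ℂ) ∩ ({g (c a), g (c b)} : Set ℂ)) :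
    Set.Finite ((fun f : ℂ ≃ᵢ ℂ => f '' (c '' Set.Icc a b)) '' F) := by
  classical
  obtain ⟨h⟩ := hΓ
  haveI : CompactSpace ↥Γ := h.symm.compactSpace
  set H : ↥Γ → ℂ := fun p => ((h p : ℂ)) with hH
  have Hcont : Continuous H := continuous_subtype_val.comp h.continuous
  have Hinj : Function.Injective H := by
    intro p q hpq
    exact h.injective (Subtype.ext hpq)
  have Hsphere : ∀ p : ↥Γ, H p ∈ Metric.sphere (0:ℂ) 1 := fun p => (h p).2
  have hmemA : a ∈ Set.Icc a b := ⟨le_refl a, le_of_lt hab⟩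
  have hmemB : b ∈ Set.Icc a b := ⟨le_of_lt hab, le_refl b⟩
  set d : ℝ := dist (c a) (c b) with hd
  have dpos : 0 < d := by
    rw [hd, dist_pos]
    intro hcc
    exact absurd (hinj hmemA hmemB hcc) (ne_of_lt hab)
  obtain ⟨δ, δpos, hδ⟩ := Metric.uniformContinuous_iff.mp
    (CompactSpace.uniformContinuous_of_continuous h.symm.continuous) d dpos
  have hHdist : ∀ p q : ↥Γ, d ≤ dist (p : ℂ) (q : ℂ) → δ ≤ dist (H p) (H q) := by
    intro p q hpq
    by_contra hlt
    push_neg at hlt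
    have h1 : dist (h p) (h q) < δ := by
      rw [Subtype.dist_eq]
      exact hlt
    have h2 := hδ h1
    rw [Homeomorph.symm_apply_apply, Homeomorph.symm_apply_apply, Subtype.dist_eq] at h2
    exact absurd h2 (not_lt.mpr hpq)
  set δ₀ : ℝ := min δ 1 with hδ₀
  have δ₀pos : 0 < δ₀ := lt_min δpos one_pos
  have δ₀le1 : δ₀ ≤ 1 := min_le_right _ _
  set ρ : ℝ := δ₀ / 4 with hρ
  have ρpos : 0 < ρ := by positivity
  set C := c '' Set.Icc a b with hC
  set S := (fun f : ℂ ≃ᵢ ℂ => f '' C) '' F with hS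
  set Φ : Set ℂ → Set ℂ := fun K => H '' (Subtype.val ⁻¹' K) with hΦ
  haveI : ConnectedSpace ↥(Set.Icc a b) :=
    Subtype.connectedSpace ⟨⟨a, hmemA⟩, isPreconnected_Icc⟩
  -- arc data for each K ∈ S
  have hprop : ∀ K ∈ S, ∃ m ∈ Set.Ico 0 (2 * Real.pi),
      ∀ t : ℝ, |t| ≤ ρ → Complex.exp ((m + t) * I) ∈ Φ K := by
    rintro K ⟨f, hf, rfl⟩
    set g : ↥(Set.Icc a b) → ↥Γ :=
      fun t => ⟨f (c ↑t), hsub f hf ⟨c ↑t, ⟨↑t, t.2, rfl⟩, rfl⟩⟩ with hg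
    have hgcont : Continuous g := by
      apply Continuous.subtype_mk
      exact f.continuous.comp hc.restrict
    have hrange : Set.range (H ∘ g) = Φ (f '' C) := by
      ext z
      constructor
      · rintro ⟨t, rfl⟩
        exact ⟨g t, ⟨c ↑t, ⟨↑t, t.2, rfl⟩, rfl⟩, rfl⟩
      · rintro ⟨p, hpK, rfl⟩
        obtain ⟨u, ⟨t, ht, rfl⟩, hfu⟩ := hpK
        exact ⟨⟨t, ht⟩, congrArg H (Subtype.ext hfu)⟩
    have hconn : IsPreconnected (Φ (f '' C)) := by
      rw [← hrange]
      exact isPreconnected_range (Hcont.comp hgcont)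
    have hsubS : Φ (f '' C) ⊆ Metric.sphere (0:ℂ) 1 := by
      rintro z ⟨p, _, rfl⟩
      exact Hsphere p
    have hxm : H (g ⟨a, hmemA⟩) ∈ Φ (f '' C) := by
      rw [← hrange]; exact ⟨⟨a, hmemA⟩, rfl⟩
    have hym : H (g ⟨b, hmemB⟩) ∈ Φ (f '' C) := by
      rw [← hrange]; exact ⟨⟨b, hmemB⟩, rfl⟩
    have hdxy : δ₀ ≤ dist (H (g ⟨a, hmemA⟩)) (H (g ⟨b, hmemB⟩)) := by
      refine le_trans (min_le_left δ 1) (hHdist _ _ ?_)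
      show d ≤ dist (f (c a)) (f (c b))
      rw [f.dist_eq]
    obtain ⟨m, hm, harc⟩ := myArc (Φ (f '' C)) hsubS hconn hxm hym hdxy
    exact ⟨m, hm, harc⟩
  -- intersections of two distinct copies lie in a two-point set
  have hint : ∀ K ∈ S, ∀ K' ∈ S, K ≠ K' → ∃ P Q : ℂ, Φ K ∩ Φ K' ⊆ {P, Q} := by
    rintro K ⟨f, hf, rfl⟩ K' ⟨f', hf', rfl⟩ hne
    have hPm : f (c a) ∈ Γ := hsub f hf ⟨c a, ⟨a, hmemA, rfl⟩, rfl⟩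
    have hQm : f (c b) ∈ Γ := hsub f hf ⟨c b, ⟨b, hmemB, rfl⟩, rfl⟩
    refine ⟨H ⟨f (c a), hPm⟩, H ⟨f (c b), hQm⟩, ?_⟩
    rintro z ⟨⟨p, hpK, rfl⟩, ⟨q, hqK, hqz⟩⟩
    have hpq : p = q := Hinj hqz.symm
    subst hpq
    have hmem2 : (p : ℂ) ∈ ({f (c a), f (c b)} : Set ℂ) :=
      ((hdisj f hf f' hf' hne) ⟨hpK, hqK⟩).1
    rcases hmem2 with h1 | h1
    · left; exact congrArg H (Subtype.ext h1)
    · right; exact congrArg H (Subtype.ext h1)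
  -- the chosen arc centers
  set mfun : Set ℂ → ℝ := fun K => if hK : K ∈ S then (hprop K hK).choose else 0 with hmfun
  have hmfun_spec : ∀ K (hK : K ∈ S), mfun K ∈ Set.Ico 0 (2 * Real.pi) ∧
      ∀ t : ℝ, |t| ≤ ρ → Complex.exp ((mfun K + t) * I) ∈ Φ K := by
    intro K hK
    rw [hmfun]
    simp only [dif_pos hK]
    obtain ⟨hm, harc⟩ := (hprop K hK).choose_spec
    exact ⟨hm, harc⟩
  -- separation of arc centers
  have hsep : ∀ K ∈ S, ∀ K' ∈ S, K ≠ K' → ρ / 2 ≤ |mfun K - mfun K'| := by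
    intro K hK K' hK' hne
    by_contra hlt
    push_neg at hlt
    obtain ⟨P, Q, hPQ⟩ := hint K hK K' hK' hne
    obtain ⟨_, harc⟩ := hmfun_spec K hK
    obtain ⟨_, harc'⟩ := hmfun_spec K' hK'
    set Δ : ℝ := mfun K - mfun K' with hΔ
    have hρ1 : ρ ≤ 1 / 4 := by rw [hρ]; linarith
    have hmemboth : ∀ t : ℝ, |t| ≤ ρ / 4 →
        Complex.exp ((mfun K + t) * I) ∈ Φ K ∩ Φ K' := by
      intro t ht
      constructor
      · exact harc t (le_trans ht (by linarith))
      · have heq : ((mfun K : ℂ) + (t : ℂ)) * I = ((mfun K' : ℂ) + ((Δ + t : ℝ) : ℂ)) * I := by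
          push_cast [hΔ]; ring
        rw [heq]
        apply harc' (Δ + t)
        calc |Δ + t| ≤ |Δ| + |t| := abs_add_le _ _
          _ ≤ ρ / 2 + ρ / 4 := by
              have := le_of_lt hlt
              exact add_le_add this ht
          _ ≤ ρ := by linarith
    have hp0 := hmemboth 0 (by simp; positivity)
    have hp1 := hmemboth (ρ / 4) (by rw [abs_of_pos (by positivity)])
    have hp2 := hmemboth (-(ρ / 4)) (by rw [abs_neg, abs_of_pos (by positivity)])
    have hdiff : ∀ s t : ℝ, |s - t| < 2 * Real.pi → s ≠ t →
        Complex.exp (((mfun K : ℂ) + (s : ℂ)) * I) ≠ Complex.exp (((mfun K : ℂ) + (t : ℂ)) * I) :=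
      fun s t hlt2 hne2 hcontra => hne2 (myExpInj' (mfun K) hlt2 hcontra)
    have h2pi : ρ / 2 < 2 * Real.pi := by
      have : ρ / 2 ≤ 1 / 8 := by linarith
      linarith [Real.pi_gt_three]
    have hd01 : Complex.exp (((mfun K : ℂ) + ((0:ℝ) : ℂ)) * I)
        ≠ Complex.exp (((mfun K : ℂ) + ((ρ/4 : ℝ) : ℂ)) * I) := by
      apply hdiff
      · rw [show (0:ℝ) - ρ/4 = -(ρ/4) by ring, abs_neg, abs_of_pos (by positivity)]
        linarith
      · intro hcc; linarith
    have hd02 : Complex.exp (((mfun K : ℂ) + ((0:ℝ) : ℂ)) * I)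
        ≠ Complex.exp (((mfun K : ℂ) + ((-(ρ/4) : ℝ) : ℂ)) * I) := by
      apply hdiff
      · rw [show (0:ℝ) - (-(ρ/4)) = ρ/4 by ring, abs_of_pos (by positivity)]
        linarith
      · intro hcc; linarith
    have hd12 : Complex.exp (((mfun K : ℂ) + ((ρ/4 : ℝ) : ℂ)) * I)
        ≠ Complex.exp (((mfun K : ℂ) + ((-(ρ/4) : ℝ) : ℂ)) * I) := by
      apply hdiff
      · rw [show (ρ/4:ℝ) - (-(ρ/4)) = ρ/2 by ring, abs_of_pos (by positivity)]
        linarith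
      · intro hcc; linarith
    have e0 := hPQ hp0
    have e1 := hPQ hp1
    have e2 := hPQ hp2
    simp only [Set.mem_insert_iff, Set.mem_singleton_iff] at e0 e1 e2
    rcases e0 with h0 | h0 <;> rcases e1 with h1 | h1 <;> rcases e2 with h2 | h2 <;>
      first
        | exact hd01 (h0.trans h1.symm)
        | exact hd02 (h0.trans h2.symm)
        | exact hd12 (h1.trans h2.symm)
  -- conclude finiteness
  have hinjOn : Set.InjOn mfun S := by
    intro K hK K' hK' he
    by_contra hne
    have hthis := hsep K hK K' hK' hne
    rw [he, sub_self, abs_zero] at hthis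
    linarith
  have hfloorInj : Set.InjOn (fun x : ℝ => ⌊x / (ρ / 2)⌋) (mfun '' S) := by
    rintro u ⟨K, hK, rfl⟩ v ⟨K', hK', rfl⟩ he
    by_contra hne
    have hKne : K ≠ K' := by
      intro hKK; apply hne; rw [hKK]
    have hsep' := hsep K hK K' hK' hKne
    simp only at he
    have h1 := Int.floor_le (mfun K / (ρ / 2))
    have h2 := Int.lt_floor_add_one (mfun K / (ρ / 2))
    have h3 := Int.floor_le (mfun K' / (ρ / 2))
    have h4 := Int.lt_floor_add_one (mfun K' / (ρ / 2))
    rw [he] at h1 h2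
    have hρ2 : (0:ℝ) < ρ / 2 := by positivity
    have hA : (mfun K - mfun K') / (ρ / 2) < 1 := by
      rw [sub_div]; linarith
    have hB : (mfun K' - mfun K) / (ρ / 2) < 1 := by
      rw [sub_div]; linarith
    have hA' := (div_lt_one hρ2).mp hA
    have hB' := (div_lt_one hρ2).mp hB
    have habs : |mfun K - mfun K'| < ρ / 2 := abs_lt.mpr ⟨by linarith, hA'⟩
    linarith
  have hfloorImg : ((fun x : ℝ => ⌊x / (ρ / 2)⌋) '' (mfun '' S)).Finite := by
    apply Set.Finite.subset (Set.finite_Icc (0:ℤ) ⌊(2 * Real.pi) / (ρ / 2)⌋)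
    rintro k ⟨u, ⟨K, hK, rfl⟩, rfl⟩
    have hm := (hmfun_spec K hK).1
    have hρ2 : (0:ℝ) < ρ / 2 := by positivity
    constructor
    · apply Int.floor_nonneg.mpr
      exact div_nonneg hm.1 (le_of_lt hρ2)
    · apply Int.floor_le_floor
      gcongr
      exact le_of_lt hm.2
  have hfinImg : (mfun '' S).Finite :=
    Set.Finite.of_finite_image hfloorImg hfloorInj
  exact Set.Finite.of_finite_image hfinImg hinjOn
end
end

section
/- If F and G are multicurves in the Euclidean plane with ∪F = ∪G (they have the same underlying point set), then F and G are equidecomposable. -/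
open Metric Set

noncomputable section

/-- A parameterized continuous simple curve in the plane (identified with ℂ):
a continuous injective map on a nondegenerate compact interval. -/
structure SimpleCurve where
  a : ℝ
  b : ℝ
  hab : a < b
  f : ℝ → ℂ
  cont : ContinuousOn f (Set.Icc a b)
  inj : Set.InjOn f (Set.Icc a b)

/-- The point set of a simple curve. -/
def SimpleCurve.carrier (c : SimpleCurve) : Set ℂ := c.f '' Set.Icc c.a c.b

/-- The endpoints of a simple curve. -/
def SimpleCurve.endpoints (c : SimpleCurve) : Set ℂ := {c.f c.a, c.f c.b}

/-- Two simple curves are congruent if an isometry of the plane maps one onto the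
other. -/
def SimpleCurve.Congr (c d : SimpleCurve) : Prop :=
  ∃ g : ℂ ≃ᵢ ℂ, g '' c.carrier = d.carrier

/-- The underlying point set of a family of simple curves. -/
def MCUnion (F : Set SimpleCurve) : Set ℂ := ⋃ c ∈ F, c.carrier

/-- A multicurve: a finite family of continuous simple curves such that every point of
the plane belongs to at most one member, or is an endpoint of exactly two members. -/
def IsMulticurve (F : Set SimpleCurve) : Prop :=
  F.Finite ∧ ∀ p : ℂ,
    ({c ∈ F | p ∈ c.carrier}).Subsingleton ∨
    (∃ c d : SimpleCurve, c ∈ F ∧ d ∈ F ∧ c ≠ d ∧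
      p ∈ c.endpoints ∧ p ∈ d.endpoints ∧ {e ∈ F | p ∈ e.carrier} = {c, d})

/-- `G` is a partition of the multicurve `F`: `G` is a multicurve with the same
underlying point set, and every member of `F` is the union of some members of `G`. -/
def IsPartitionOf (G F : Set SimpleCurve) : Prop :=
  IsMulticurve G ∧ MCUnion G = MCUnion F ∧
    ∀ c ∈ F, ∃ H ⊆ G, c.carrier = MCUnion H

/-- Two multicurves are equidecomposable if they admit partitions whose members are
matched bijectively into congruent pairs. -/
def Equidecomposable (F G : Set SimpleCurve) : Prop :=
  ∃ F' G' : Set SimpleCurve, IsPartitionOf F' F ∧ IsPartitionOf G' G ∧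
    ∃ e : F' ≃ G', ∀ c : F', SimpleCurve.Congr c.1 (e c).1

/-! ### Auxiliary development -/

namespace MCAux

lemma curve_compact (c : SimpleCurve) : IsCompact c.carrier :=
  isCompact_Icc.image_of_continuousOn c.cont

lemma curve_closed (c : SimpleCurve) : IsClosed c.carrier :=
  (curve_compact c).isClosed

lemma curve_ext {e e' : SimpleCurve} (ha : e.a = e'.a) (hb : e.b = e'.b)
    (hf : e.f = e'.f) : e = e' := by
  cases e; cases e'; dsimp at ha hb hf; subst ha; subst hb; subst hf; rfl

/-- The trace of curve `c` in the parameter interval of curve `d`. -/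
def S (c d : SimpleCurve) : Set ℝ := Icc d.a d.b ∩ d.f ⁻¹' c.carrier

lemma S_closed (c d : SimpleCurve) : IsClosed (S c d) :=
  d.cont.preimage_isClosed_of_isClosed isClosed_Icc (curve_closed c)

lemma S_subset (c d : SimpleCurve) : S c d ⊆ Icc d.a d.b := inter_subset_left


lemma comp_closed {F : Set ℝ} (hF : IsClosed F) (x : ℝ) :
    IsClosed (connectedComponentIn F x) := by
  by_cases hx : x ∈ F
  · apply isClosed_of_closure_subset
    exact (isPreconnected_connectedComponentIn.closure).subset_connectedComponentIn
      (subset_closure (mem_connectedComponentIn hx))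
      (hF.closure_subset_iff.mpr (connectedComponentIn_subset F x))
  · rw [connectedComponentIn_eq_empty hx]; exact isClosed_empty

lemma cover_lemma {ι : Type} {s : Set ι} (hs : s.Finite) {K : ι → Set ℝ} {J : Set ℝ}
    (hJ : IsPreconnected J) (hne : J.Nonempty) (hcl : ∀ i ∈ s, IsClosed (K i))
    (hcov : J ⊆ ⋃ i ∈ s, K i)
    (hdisj : ∀ i ∈ s, ∀ j ∈ s, i ≠ j → J ∩ (K i ∩ K j) = ∅) :
    ∃ i ∈ s, J ⊆ K i := by
  revert hcl hcov hdisj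
  refine Set.Finite.induction_on
    (motive := fun s _ => (∀ i ∈ s, IsClosed (K i)) → (J ⊆ ⋃ i ∈ s, K i) →
      (∀ i ∈ s, ∀ j ∈ s, i ≠ j → J ∩ (K i ∩ K j) = ∅) → ∃ i ∈ s, J ⊆ K i)
    s hs ?_ ?_
  case _ =>
    intro _ hcov _
    simp only [mem_empty_iff_false, iUnion_of_empty, iUnion_empty,
      subset_empty_iff] at hcov
    exact absurd (hcov ▸ hne) (by simp)
  case _ =>
    intro i₀ s' hi₀ hs' ih hcl hcov hdisj
    by_cases hJi : J ⊆ K i₀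
    · exact ⟨i₀, mem_insert _ _, hJi⟩
    · have hVcl : IsClosed (⋃ j ∈ s', K j) :=
        hs'.isClosed_biUnion fun j hj => hcl j (mem_insert_of_mem _ hj)
      have hcov' : J ⊆ K i₀ ∪ ⋃ j ∈ s', K j := by
        intro x hx
        rcases mem_iUnion₂.mp (hcov hx) with ⟨j, hj, hxj⟩
        rcases mem_insert_iff.mp hj with rfl | hj'
        · exact Or.inl hxj
        · exact Or.inr (mem_iUnion₂.mpr ⟨j, hj', hxj⟩)
      have hd : J ∩ (K i₀ ∩ ⋃ j ∈ s', K j) = ∅ := by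
        apply eq_empty_iff_forall_notMem.mpr
        rintro x ⟨hxJ, hxi, hxU⟩
        rcases mem_iUnion₂.mp hxU with ⟨j, hj, hxj⟩
        have hij : i₀ ≠ j := by rintro rfl; exact hi₀ hj
        have := hdisj i₀ (mem_insert _ _) j (mem_insert_of_mem _ hj) hij
        exact eq_empty_iff_forall_notMem.mp this x ⟨hxJ, hxi, hxj⟩
      rcases (isPreconnected_iff_subset_of_disjoint_closed.mp hJ _ _
        (hcl i₀ (mem_insert _ _)) hVcl hcov' hd) with h1 | h2
      · exact absurd h1 hJi
      · obtain ⟨i, hi, hJK⟩ := ih (fun i hi => hcl i (mem_insert_of_mem _ hi)) h2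
          (fun i hi j hj hij =>
            hdisj i (mem_insert_of_mem _ hi) j (mem_insert_of_mem _ hj) hij)
        exact ⟨i, mem_insert_of_mem _ hi, hJK⟩

lemma core_right {ι : Type} {s : Set ι} (hs : s.Finite) {K : ι → Set ℝ} {a b t : ℝ}
    (hcl : ∀ i ∈ s, IsClosed (K i)) (hcov : Icc a b ⊆ ⋃ i ∈ s, K i)
    (hfin : ∀ i ∈ s, ∀ j ∈ s, i ≠ j → (K i ∩ K j).Finite)
    (hta : a ≤ t) (htb : t < b) :
    ∃ i ∈ s, ∃ δ > 0, t + δ ≤ b ∧ Icc t (t + δ) ⊆ K i := by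
  classical
  set B : Set ℝ := ⋃ i ∈ s, ⋃ j ∈ s \ {i}, K i ∩ K j with hB
  have hBfin : B.Finite :=
    hs.biUnion fun i hi => (hs.diff (t := {i})).biUnion fun j hj =>
      hfin i hi j hj.1 (by rintro rfl; exact hj.2 rfl)
  set C := B ∩ Ioc t b with hC
  have hCfin : C.Finite := hBfin.inter_of_left _
  obtain ⟨δ, hδ0, hδb, hdisjB⟩ : ∃ δ > 0, t + δ ≤ b ∧ Ioc t (t + δ) ∩ B = ∅ := by
    by_cases hne : C.Nonempty
    · have hmC : sInf C ∈ C := hne.csInf_mem hCfin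
      refine ⟨(sInf C - t) / 2, by linarith [hmC.2.1], by linarith [hmC.2.1, hmC.2.2], ?_⟩
      apply eq_empty_iff_forall_notMem.mpr
      rintro x ⟨⟨hx1, hx2⟩, hxB⟩
      have hxC : x ∈ C := ⟨hxB, hx1, by linarith [hmC.2.1, hmC.2.2]⟩
      have := csInf_le hCfin.bddBelow hxC
      linarith
    · refine ⟨b - t, by linarith, by linarith, ?_⟩
      apply eq_empty_iff_forall_notMem.mpr
      rintro x ⟨⟨hx1, hx2⟩, hxB⟩
      exact hne ⟨x, hxB, hx1, by linarith⟩
  have hJne : (Ioc t (t + δ)).Nonempty := nonempty_Ioc.mpr (by linarith)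
  have hJcov : Ioc t (t + δ) ⊆ ⋃ i ∈ s, K i := fun x hx =>
    hcov ⟨by linarith [hx.1], le_trans hx.2 hδb⟩
  have hJdisj : ∀ i ∈ s, ∀ j ∈ s, i ≠ j → Ioc t (t + δ) ∩ (K i ∩ K j) = ∅ := by
    intro i hi j hj hij
    apply eq_empty_iff_forall_notMem.mpr
    rintro x ⟨hxJ, hxK⟩
    have hxB : x ∈ B := by
      rw [hB]
      simp only [mem_iUnion, mem_diff, mem_singleton_iff]
      exact ⟨i, hi, j, ⟨hj, fun hh => hij hh.symm⟩, hxK⟩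
    exact eq_empty_iff_forall_notMem.mp hdisjB x ⟨hxJ, hxB⟩
  obtain ⟨i, hi, hJK⟩ := cover_lemma hs isPreconnected_Ioc hJne hcl hJcov hJdisj
  refine ⟨i, hi, δ, hδ0, hδb, ?_⟩
  have htK : t ∈ K i := by
    have h1 : t ∈ closure (Ioc t (t + δ)) := by
      rw [closure_Ioc (by linarith : t ≠ t + δ)]
      exact ⟨le_refl _, by linarith⟩
    exact (hcl i hi).closure_subset_iff.mpr hJK h1
  intro x hx
  rcases eq_or_lt_of_le hx.1 with rfl | hlt
  · exact htK
  · exact hJK ⟨hlt, hx.2⟩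

lemma core_left {ι : Type} {s : Set ι} (hs : s.Finite) {K : ι → Set ℝ} {a b t : ℝ}
    (hcl : ∀ i ∈ s, IsClosed (K i)) (hcov : Icc a b ⊆ ⋃ i ∈ s, K i)
    (hfin : ∀ i ∈ s, ∀ j ∈ s, i ≠ j → (K i ∩ K j).Finite)
    (hta : a < t) (htb : t ≤ b) :
    ∃ i ∈ s, ∃ δ > 0, a ≤ t - δ ∧ Icc (t - δ) t ⊆ K i := by
  have hneg : Continuous (fun x : ℝ => -x) := continuous_neg
  obtain ⟨i, hi, δ, hδ0, hδ1, hδ2⟩ :=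
    core_right (K := fun i => (fun x : ℝ => -x) ⁻¹' K i) (a := -b) (b := -a) (t := -t)
      hs (fun i hi => (hcl i hi).preimage hneg)
      (by
        intro x hx
        obtain ⟨hx1, hx2⟩ := hx
        have hmem : -x ∈ Icc a b := ⟨by linarith, by linarith⟩
        rcases mem_iUnion₂.mp (hcov hmem) with ⟨j, hj, hxj⟩
        exact mem_iUnion₂.mpr ⟨j, hj, by simpa using hxj⟩)
      (fun i hi j hj hij => by
        show ((fun x : ℝ => -x) ⁻¹' K i ∩ (fun x : ℝ => -x) ⁻¹' K j).Finite
        rw [← preimage_inter]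
        exact Set.Finite.preimage neg_injective.injOn (hfin i hi j hj hij))
      (by linarith) (by linarith)
  refine ⟨i, hi, δ, hδ0, by linarith, ?_⟩
  intro x hx
  obtain ⟨hx1, hx2⟩ := hx
  have : -x ∈ Icc (-t) (-t + δ) := ⟨by linarith, by linarith⟩
  have := hδ2 this
  simpa using this


/-- Subcurve of `d` on parameter interval `[u,v]`. -/
def piece (d : SimpleCurve) (u v : ℝ) (h : u < v) (hs : Icc u v ⊆ Icc d.a d.b) :
    SimpleCurve :=
  ⟨u, v, h, d.f, d.cont.mono hs, d.inj.mono hs⟩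

/-- `e` is a piece of the refinement coming from `c ∈ F` and `d ∈ G`: its parameter
interval is a nondegenerate connected component of `S c d`. -/
def IsPiece (c d e : SimpleCurve) : Prop :=
  ∃ (u v : ℝ) (h : u < v) (hs : Icc u v ⊆ Icc d.a d.b),
    connectedComponentIn (S c d) u = Icc u v ∧ e = piece d u v h hs

lemma piece_carrier {d : SimpleCurve} {u v : ℝ} {h : u < v}
    {hs : Icc u v ⊆ Icc d.a d.b} : (piece d u v h hs).carrier = d.f '' Icc u v := rfl

lemma isPiece_carrier_subset {c d e : SimpleCurve} (he : IsPiece c d e) :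
    e.carrier ⊆ c.carrier ∩ d.carrier := by
  obtain ⟨u, v, huv, hs, hcomp, rfl⟩ := he
  have hIS : Icc u v ⊆ S c d := by
    rw [← hcomp]; exact connectedComponentIn_subset _ _
  rintro _ ⟨t, ht, rfl⟩
  have h2 := hIS ht
  exact ⟨h2.2, ⟨t, h2.1, rfl⟩⟩





/-- From two distinct points of `S c d` joined inside `S c d`, produce a piece. -/
lemma comp_to_piece {c d : SimpleCurve} {t t' : ℝ} (ht : t ∈ S c d)
    (hne : t ≠ t') (huIcc : uIcc t t' ⊆ S c d) :
    ∃ e, IsPiece c d e ∧ d.f t ∈ e.carrier := by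
  set comp := connectedComponentIn (S c d) t with hcompdef
  have hsub : uIcc t t' ⊆ comp :=
    isPreconnected_uIcc.subset_connectedComponentIn left_mem_uIcc huIcc
  have hclosed : IsClosed comp := comp_closed (S_closed c d) t
  have hcompsub : comp ⊆ Icc d.a d.b :=
    (connectedComponentIn_subset _ _).trans (S_subset c d)
  have hcompact : IsCompact comp :=
    IsCompact.of_isClosed_subset isCompact_Icc hclosed hcompsub
  have hconn : IsConnected comp :=
    ⟨⟨t, mem_connectedComponentIn ht⟩, isPreconnected_connectedComponentIn⟩
  have heq : comp = Icc (sInf comp) (sSup comp) :=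
    eq_Icc_of_connected_compact hconn hcompact
  set u := sInf comp with hu'
  set v := sSup comp with hv'
  have htc : t ∈ comp := mem_connectedComponentIn ht
  have ht'c : t' ∈ comp := hsub right_mem_uIcc
  have htI : t ∈ Icc u v := by rw [← heq]; exact htc
  have ht'I : t' ∈ Icc u v := by rw [← heq]; exact ht'c
  have huv : u < v := by
    rcases lt_or_gt_of_ne hne with hlt | hlt
    · exact lt_of_le_of_lt htI.1 (lt_of_lt_of_le hlt ht'I.2)
    · exact lt_of_le_of_lt ht'I.1 (lt_of_lt_of_le hlt htI.2)
  have hu : u ∈ comp := by rw [heq]; exact left_mem_Icc.mpr huv.le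
  have hcompu : connectedComponentIn (S c d) u = Icc u v :=
    (connectedComponentIn_eq hu).symm.trans heq
  have hs : Icc u v ⊆ Icc d.a d.b := by rw [← heq]; exact hcompsub
  exact ⟨piece d u v huv hs, ⟨u, v, huv, hs, hcompu, rfl⟩, ⟨t, htI, rfl⟩⟩

lemma ordconn_preimage (d : SimpleCurve) {A : Set ℂ} (hA : A ⊆ d.carrier)
    (hc : IsPreconnected A) : OrdConnected (Icc d.a d.b ∩ d.f ⁻¹' A) := by
  constructor
  rintro t1 ⟨ht1I, ht1A⟩ t2 ⟨ht2I, ht2A⟩ t' ht'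
  have ht'I : t' ∈ Icc d.a d.b := ⟨le_trans ht1I.1 ht'.1, le_trans ht'.2 ht2I.2⟩
  refine ⟨ht'I, ?_⟩
  rw [mem_preimage]
  by_contra hnot
  have hsub1 : Icc t' d.b ⊆ Icc d.a d.b := Icc_subset_Icc ht'I.1 le_rfl
  have hsub2 : Icc d.a t' ⊆ Icc d.a d.b := Icc_subset_Icc le_rfl ht'I.2
  set U := (d.f '' Icc t' d.b)ᶜ with hU
  set V := (d.f '' Icc d.a t')ᶜ with hV
  have hUo : IsOpen U :=
    (isCompact_Icc.image_of_continuousOn (d.cont.mono hsub1)).isClosed.isOpen_compl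
  have hVo : IsOpen V :=
    (isCompact_Icc.image_of_continuousOn (d.cont.mono hsub2)).isClosed.isOpen_compl
  have hcov : A ⊆ U ∪ V := by
    intro x hx
    by_contra hxx
    rw [mem_union, hU, hV] at hxx
    push_neg at hxx
    simp only [mem_compl_iff, not_not] at hxx
    obtain ⟨⟨s1, hs1, e1⟩, ⟨s2, hs2, e2⟩⟩ := hxx
    have hs12 : s1 = s2 := d.inj (hsub1 hs1) (hsub2 hs2) (e1.trans e2.symm)
    have hseq : s1 = t' := le_antisymm (hs12 ▸ hs2.2) hs1.1
    apply hnot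
    rw [← hseq, e1]
    exact hx
  have hAU : (A ∩ U).Nonempty := by
    refine ⟨d.f t1, ht1A, ?_⟩
    intro hmem
    obtain ⟨s1, hs1, e1⟩ := hmem
    have : s1 = t1 := d.inj (hsub1 hs1) ht1I e1
    have ht1t' : t1 = t' := le_antisymm ht'.1 (this ▸ hs1.1)
    exact hnot (ht1t' ▸ ht1A)
  have hAV : (A ∩ V).Nonempty := by
    refine ⟨d.f t2, ht2A, ?_⟩
    intro hmem
    obtain ⟨s2, hs2, e2⟩ := hmem
    have : s2 = t2 := d.inj (hsub2 hs2) ht2I e2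
    have ht2t' : t2 = t' := le_antisymm (this ▸ hs2.2) ht'.2
    exact hnot (ht2t' ▸ ht2A)
  obtain ⟨x, hxA, hxU, hxV⟩ := hc U V hUo hVo hcov hAU hAV
  obtain ⟨sx, hsx, rfl⟩ := hA hxA
  rcases le_total sx t' with hle | hle
  · exact hxV ⟨sx, ⟨hsx.1, hle⟩, rfl⟩
  · exact hxU ⟨sx, ⟨hle, hsx.2⟩, rfl⟩

lemma inter_endpoints {X : Set SimpleCurve} (hX : IsMulticurve X) {x y : SimpleCurve}
    (hx : x ∈ X) (hy : y ∈ X) (hxy : x ≠ y) {p : ℂ} (hpx : p ∈ x.carrier)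
    (hpy : p ∈ y.carrier) :
    p ∈ x.endpoints ∧ p ∈ y.endpoints ∧ {e ∈ X | p ∈ e.carrier} = {x, y} := by
  rcases hX.2 p with hss | ⟨c, d, hcX, hdX, hcd, hpc, hpd, hset⟩
  · exact absurd (hss ⟨hx, hpx⟩ ⟨hy, hpy⟩) hxy
  · have hxm : x ∈ ({c, d} : Set SimpleCurve) := by rw [← hset]; exact ⟨hx, hpx⟩
    have hym : y ∈ ({c, d} : Set SimpleCurve) := by rw [← hset]; exact ⟨hy, hpy⟩
    simp only [mem_insert_iff, mem_singleton_iff] at hxm hym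
    rcases hxm with h1 | h1 <;> rcases hym with h2 | h2
    · exact absurd (h1.trans h2.symm) hxy
    · refine ⟨by rw [h1]; exact hpc, by rw [h2]; exact hpd, hset.trans ?_⟩
      rw [h1, h2]
    · refine ⟨by rw [h1]; exact hpd, by rw [h2]; exact hpc, hset.trans ?_⟩
      rw [h1, h2, Set.pair_comm]
    · exact absurd (h1.trans h2.symm) hxy

lemma inter_finite {X : Set SimpleCurve} (hX : IsMulticurve X) {x y : SimpleCurve}
    (hx : x ∈ X) (hy : y ∈ X) (hxy : x ≠ y) : (x.carrier ∩ y.carrier).Finite := by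
  have hfin : (x.endpoints).Finite := (Set.finite_singleton _).insert _
  apply hfin.subset
  rintro p ⟨hpx, hpy⟩
  exact (inter_endpoints hX hx hy hxy hpx hpy).1

lemma preimage_inter_finite (d : SimpleCurve) {A : Set ℂ} (hA : A.Finite) :
    (Icc d.a d.b ∩ d.f ⁻¹' A).Finite := by
  apply Set.Finite.of_finite_image (f := d.f)
  · apply hA.subset
    rintro _ ⟨x, ⟨hxI, hxA⟩, rfl⟩
    exact hxA
  · exact d.inj.mono inter_subset_left

lemma S_inter_finite {X : Set SimpleCurve} (hX : IsMulticurve X) {x y d : SimpleCurve}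
    (hx : x ∈ X) (hy : y ∈ X) (hxy : x ≠ y) : (S x d ∩ S y d).Finite := by
  have h1 : S x d ∩ S y d ⊆ Icc d.a d.b ∩ d.f ⁻¹' (x.carrier ∩ y.carrier) := by
    rintro t ⟨⟨ha1, ha2⟩, ⟨hb1, hb2⟩⟩
    exact ⟨ha1, ha2, hb2⟩
  exact (preimage_inter_finite d (inter_finite hX hx hy hxy)).subset h1

section Main

variable {F G : Set SimpleCurve}

/-- Covering of the parameter interval of `d ∈ G` by traces of members of `F`. -/
lemma cov_param (hFG : MCUnion G ⊆ MCUnion F) {d : SimpleCurve} (hd : d ∈ G) :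
    Icc d.a d.b ⊆ ⋃ c ∈ F, S c d := by
  intro t ht
  have hmem : d.f t ∈ MCUnion G := mem_biUnion hd ⟨t, ht, rfl⟩
  rcases mem_iUnion₂.mp (hFG hmem) with ⟨c, hc, hpc⟩
  exact mem_iUnion₂.mpr ⟨c, hc, ht, hpc⟩

lemma exists_piece_G (hF : IsMulticurve F) (hFG : MCUnion G ⊆ MCUnion F)
    {d : SimpleCurve} (hd : d ∈ G) {p : ℂ} (hp : p ∈ d.carrier) :
    ∃ c ∈ F, ∃ e, IsPiece c d e ∧ p ∈ e.carrier := by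
  obtain ⟨t, htI, rfl⟩ := hp
  have hcl : ∀ c ∈ F, IsClosed (S c d) := fun c _ => S_closed c d
  have hcov := cov_param (F := F) hFG hd
  have hfin : ∀ x ∈ F, ∀ y ∈ F, x ≠ y → (S x d ∩ S y d).Finite :=
    fun x hx y hy hxy => S_inter_finite hF hx hy hxy
  rcases lt_or_eq_of_le htI.2 with htb | htb
  · obtain ⟨c, hc, δ, hδ0, hδb, hKsub⟩ := core_right hF.1 hcl hcov hfin htI.1 htb
    have ht : t ∈ S c d := hKsub ⟨le_rfl, by linarith⟩
    have h2 : uIcc t (t + δ) ⊆ S c d := by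
      rw [uIcc_of_le (by linarith)]; exact hKsub
    obtain ⟨e, he, hpe⟩ := comp_to_piece ht (ne_of_lt (by linarith)) h2
    exact ⟨c, hc, e, he, hpe⟩
  · obtain ⟨c, hc, δ, hδ0, hδa, hKsub⟩ :=
      core_left hF.1 hcl hcov hfin (htb ▸ d.hab) htI.2
    have ht : t ∈ S c d := hKsub ⟨by linarith, le_rfl⟩
    have h2 : uIcc t (t - δ) ⊆ S c d := by
      rw [uIcc_of_ge (by linarith)]; exact hKsub
    obtain ⟨e, he, hpe⟩ := comp_to_piece ht (ne_of_gt (by linarith)) h2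
    exact ⟨c, hc, e, he, hpe⟩

lemma exists_piece_F (hF : IsMulticurve F) (hG : IsMulticurve G)
    (hFG : MCUnion G ⊆ MCUnion F) (hGF : MCUnion F ⊆ MCUnion G)
    {c : SimpleCurve} (hc : c ∈ F) {p : ℂ} (hp : p ∈ c.carrier) :
    ∃ d ∈ G, ∃ e, IsPiece c d e ∧ p ∈ e.carrier := by
  obtain ⟨s0, hs0I, rfl⟩ := hp
  have hcl : ∀ d ∈ G, IsClosed (S d c) := fun d _ => S_closed d c
  have hcov : Icc c.a c.b ⊆ ⋃ d ∈ G, S d c := cov_param (F := G) (G := F) hGF hc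
  have hfin : ∀ x ∈ G, ∀ y ∈ G, x ≠ y → (S x c ∩ S y c).Finite :=
    fun x hx y hy hxy => S_inter_finite hG hx hy hxy
  obtain ⟨d, hd, x, y, hxy, hsub, hs0mem⟩ :
      ∃ d ∈ G, ∃ x y : ℝ, x < y ∧ Icc x y ⊆ S d c ∧ s0 ∈ Icc x y := by
    rcases lt_or_eq_of_le hs0I.2 with hb | hb
    · obtain ⟨d, hd, δ, hδ0, hδb, hKsub⟩ := core_right hG.1 hcl hcov hfin hs0I.1 hb
      exact ⟨d, hd, s0, s0 + δ, by linarith, hKsub, le_rfl, by linarith⟩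
    · obtain ⟨d, hd, δ, hδ0, hδa, hKsub⟩ :=
        core_left hG.1 hcl hcov hfin (hb ▸ c.hab) hs0I.2
      exact ⟨d, hd, s0 - δ, s0, by linarith, hKsub, by linarith, le_rfl⟩
  set A := c.f '' Icc x y with hA
  have hxyI : Icc x y ⊆ Icc c.a c.b := hsub.trans (S_subset d c)
  have hAc : A ⊆ c.carrier := fun _ ⟨w, hw, e⟩ => ⟨w, hxyI hw, e⟩
  have hAd : A ⊆ d.carrier := by
    rintro _ ⟨w, hw, rfl⟩
    exact (hsub hw).2
  have hAconn : IsPreconnected A := isPreconnected_Icc.image _ (c.cont.mono hxyI)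
  have hps : c.f s0 ∈ A := ⟨s0, hs0mem, rfl⟩
  have hq1 : c.f x ∈ A := ⟨x, left_mem_Icc.mpr hxy.le, rfl⟩
  have hq2 : c.f y ∈ A := ⟨y, right_mem_Icc.mpr hxy.le, rfl⟩
  have hqne : c.f x ≠ c.f y := fun hh =>
    (ne_of_lt hxy) (c.inj (hxyI (left_mem_Icc.mpr hxy.le))
      (hxyI (right_mem_Icc.mpr hxy.le)) hh)
  obtain ⟨t, htI, htp⟩ := hAd hps
  obtain ⟨t1, ht1I, ht1p⟩ := hAd hq1
  obtain ⟨t2, ht2I, ht2p⟩ := hAd hq2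
  have ht12 : t1 ≠ t2 := fun hh => hqne (by rw [← ht1p, ← ht2p, hh])
  have hOC := ordconn_preimage d hAd hAconn
  have htT : t ∈ Icc d.a d.b ∩ d.f ⁻¹' A := ⟨htI, by rw [mem_preimage, htp]; exact hps⟩
  have ht1T : t1 ∈ Icc d.a d.b ∩ d.f ⁻¹' A :=
    ⟨ht1I, by rw [mem_preimage, ht1p]; exact hq1⟩
  have ht2T : t2 ∈ Icc d.a d.b ∩ d.f ⁻¹' A :=
    ⟨ht2I, by rw [mem_preimage, ht2p]; exact hq2⟩
  have hTS : Icc d.a d.b ∩ d.f ⁻¹' A ⊆ S c d := by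
    rintro w ⟨hwI, hwA⟩
    exact ⟨hwI, hAc hwA⟩
  obtain ⟨t', ht'T, htne⟩ : ∃ t', t' ∈ Icc d.a d.b ∩ d.f ⁻¹' A ∧ t ≠ t' := by
    by_cases hh : t = t1
    · exact ⟨t2, ht2T, fun hc2 => ht12 (hh.symm.trans hc2)⟩
    · exact ⟨t1, ht1T, hh⟩
  have huIcc : uIcc t t' ⊆ S c d := (hOC.uIcc_subset htT ht'T).trans hTS
  obtain ⟨e, he, hpe⟩ := comp_to_piece (hTS htT) htne huIcc
  exact ⟨d, hd, e, he, by rw [← htp]; exact hpe⟩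

/-- candidate endpoints of pieces over `d`. -/
def Ed (F : Set SimpleCurve) (d : SimpleCurve) : Set ℝ :=
  insert d.a (insert d.b (⋃ x ∈ F, ⋃ y ∈ F \ {x}, S x d ∩ S y d))

lemma Ed_finite (hF : IsMulticurve F) (d : SimpleCurve) : (Ed F d).Finite := by
  apply Set.Finite.insert
  apply Set.Finite.insert
  apply hF.1.biUnion
  intro x hx
  apply (hF.1.diff (t := {x})).biUnion
  intro y hy
  exact S_inter_finite hF hx hy.1 (fun hh => hy.2 (by simp [hh]))

lemma endpoint_mem (hF : IsMulticurve F) (hFG : MCUnion G ⊆ MCUnion F)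
    {c d e : SimpleCurve} (hc : c ∈ F) (hd : d ∈ G) (he : IsPiece c d e) :
    e.a ∈ Ed F d ∧ e.b ∈ Ed F d ∧ e.f = d.f := by
  obtain ⟨u, v, huv, hs, hcomp, rfl⟩ := he
  have hIS : Icc u v ⊆ S c d := by
    rw [← hcomp]; exact connectedComponentIn_subset _ _
  have hu : u ∈ S c d := hIS (left_mem_Icc.mpr huv.le)
  have hv : v ∈ S c d := hIS (right_mem_Icc.mpr huv.le)
  have hcl : ∀ c' ∈ F, IsClosed (S c' d) := fun c' _ => S_closed c' d
  have hcov := cov_param (F := F) hFG hd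
  have hfin : ∀ x ∈ F, ∀ y ∈ F, x ≠ y → (S x d ∩ S y d).Finite :=
    fun x hx y hy hxy => S_inter_finite hF hx hy hxy
  refine ⟨?_, ?_, rfl⟩
  · show u ∈ Ed F d
    by_cases hua : u = d.a
    · rw [hua]; exact mem_insert _ _
    · have hua' : d.a < u := lt_of_le_of_ne hu.1.1 (Ne.symm hua)
      obtain ⟨x, hx, δ, hδ0, hδa, hKsub⟩ := core_left hF.1 hcl hcov hfin hua' hu.1.2
      have hxc : x ≠ c := by
        rintro rfl
        have hJ : Icc (u - δ) v ⊆ S x d := by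
          rw [← Icc_union_Icc_eq_Icc (by linarith : u - δ ≤ u) huv.le]
          exact union_subset hKsub hIS
        have hsub2 : Icc (u - δ) v ⊆ connectedComponentIn (S x d) u :=
          isPreconnected_Icc.subset_connectedComponentIn ⟨by linarith, huv.le⟩ hJ
        rw [hcomp] at hsub2
        have := (hsub2 (left_mem_Icc.mpr (by linarith))).1
        linarith
      refine mem_insert_of_mem _ (mem_insert_of_mem _ ?_)
      refine mem_biUnion hx ?_
      refine mem_biUnion (show c ∈ F \ {x} from ⟨hc, by simp [(Ne.symm hxc)]⟩) ?_
      exact ⟨hKsub (right_mem_Icc.mpr (by linarith)), hu⟩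
  · show v ∈ Ed F d
    by_cases hvb : v = d.b
    · rw [hvb]; exact mem_insert_of_mem _ (mem_insert _ _)
    · have hvb' : v < d.b := lt_of_le_of_ne hv.1.2 hvb
      obtain ⟨x, hx, δ, hδ0, hδb, hKsub⟩ := core_right hF.1 hcl hcov hfin hv.1.1 hvb'
      have hxc : x ≠ c := by
        rintro rfl
        have hJ : Icc u (v + δ) ⊆ S x d := by
          rw [← Icc_union_Icc_eq_Icc huv.le (by linarith : v ≤ v + δ)]
          exact union_subset hIS hKsub
        have hsub2 : Icc u (v + δ) ⊆ connectedComponentIn (S x d) u :=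
          isPreconnected_Icc.subset_connectedComponentIn
            (left_mem_Icc.mpr (by linarith)) hJ
        rw [hcomp] at hsub2
        have := (hsub2 (right_mem_Icc.mpr (by linarith))).2
        linarith
      refine mem_insert_of_mem _ (mem_insert_of_mem _ ?_)
      refine mem_biUnion hx ?_
      refine mem_biUnion (show c ∈ F \ {x} from ⟨hc, by simp [(Ne.symm hxc)]⟩) ?_
      exact ⟨hKsub (left_mem_Icc.mpr (by linarith)), hv⟩

/-- The common refinement. -/
def HH (F G : Set SimpleCurve) : Set SimpleCurve :=
  {e | ∃ c ∈ F, ∃ d ∈ G, IsPiece c d e}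

lemma HH_finite (hF : IsMulticurve F) (hG : IsMulticurve G)
    (hFG : MCUnion G ⊆ MCUnion F) : (HH F G).Finite := by
  have hsub : HH F G ⊆ ⋃ d ∈ G, ⋃ u ∈ Ed F d, ⋃ v ∈ Ed F d,
      {e : SimpleCurve | e.a = u ∧ e.b = v ∧ e.f = d.f} := by
    rintro e ⟨c, hc, d, hd, he⟩
    obtain ⟨h1, h2, h3⟩ := endpoint_mem hF hFG hc hd he
    exact mem_biUnion hd (mem_biUnion h1 (mem_biUnion h2 ⟨rfl, rfl, h3⟩))
  apply Set.Finite.subset ?_ hsub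
  apply hG.1.biUnion; intro d _
  apply (Ed_finite hF d).biUnion; intro u _
  apply (Ed_finite hF d).biUnion; intro v _
  apply Set.Subsingleton.finite
  rintro e ⟨ha, hb, hf⟩ e' ⟨ha', hb', hf'⟩
  exact curve_ext (ha.trans ha'.symm) (hb.trans hb'.symm) (hf.trans hf'.symm)

lemma piece_unique {c d e e' : SimpleCurve} {p : ℂ} (he : IsPiece c d e)
    (he' : IsPiece c d e') (hp : p ∈ e.carrier) (hp' : p ∈ e'.carrier) : e = e' := by
  obtain ⟨u, v, huv, hs, hcomp, rfl⟩ := he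
  obtain ⟨u', v', huv', hs', hcomp', rfl⟩ := he'
  obtain ⟨t, ht, htp⟩ := hp
  obtain ⟨t', ht', ht'p⟩ := hp'
  have htt : t = t' := d.inj (hs ht) (hs' ht') (htp.trans ht'p.symm)
  subst htt
  have h1 : connectedComponentIn (S c d) u = connectedComponentIn (S c d) t :=
    connectedComponentIn_eq (by rw [hcomp]; exact ht)
  have h2 : connectedComponentIn (S c d) u' = connectedComponentIn (S c d) t :=
    connectedComponentIn_eq (by rw [hcomp']; exact ht')
  have hIcc : Icc u v = Icc u' v' := by
    rw [← hcomp, ← hcomp', h1, h2]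
  have hu : u = u' := by
    rw [← csInf_Icc huv.le, hIcc, csInf_Icc huv'.le]
  have hv : v = v' := by
    rw [← csSup_Icc huv.le, hIcc, csSup_Icc huv'.le]
  subst hu; subst hv
  rfl

lemma pieces_same_d_aux (hF : IsMulticurve F) {c c' d e e' : SimpleCurve} {p : ℂ}
    (hc : c ∈ F) (hc' : c' ∈ F) (he : IsPiece c d e) (he' : IsPiece c' d e')
    (hp : p ∈ e.carrier) (hp' : p ∈ e'.carrier) (hcc : c ≠ c') :
    p ∈ e.endpoints := by
  obtain ⟨u, v, huv, hs, hcomp, rfl⟩ := he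
  obtain ⟨u', v', huv', hs', hcomp', rfl⟩ := he'
  obtain ⟨t, ht, rfl⟩ := hp
  obtain ⟨t', ht', ht'p⟩ := hp'
  have htt : t' = t := d.inj (hs' ht') (hs ht) ht'p
  subst htt
  have hfin : (S c d ∩ S c' d).Finite := S_inter_finite hF hc hc' hcc
  have hIS : Icc u v ⊆ S c d := by
    rw [← hcomp]; exact connectedComponentIn_subset _ _
  have hIS' : Icc u' v' ⊆ S c' d := by
    rw [← hcomp']; exact connectedComponentIn_subset _ _
  have hkey : ∀ w z : ℝ, w < z → ¬(Icc w z ⊆ Icc u v ∩ Icc u' v') := by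
    intro w z hwz hss
    exact (Icc_infinite hwz)
      (hfin.subset (fun r hr => ⟨hIS (hss hr).1, hIS' (hss hr).2⟩))
  have e1 : t' = u ∨ t' = v := by
    by_contra hcon
    push_neg at hcon
    have ha1t : u < t' := lt_of_le_of_ne ht.1 (Ne.symm hcon.1)
    have htb1 : t' < v := lt_of_le_of_ne ht.2 hcon.2
    rcases lt_or_eq_of_le ht'.2 with hlt | heq
    · refine hkey (max u u') (min v v') ?_ ?_
      · exact lt_of_le_of_lt (max_le ha1t.le ht'.1) (lt_min htb1 hlt)
      · exact subset_inter (Icc_subset_Icc (le_max_left _ _) (min_le_left _ _))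
          (Icc_subset_Icc (le_max_right _ _) (min_le_right _ _))
    · refine hkey (max u u') t' ?_ ?_
      · exact max_lt ha1t (heq ▸ huv')
      · exact subset_inter (Icc_subset_Icc (le_max_left _ _) htb1.le)
          (Icc_subset_Icc (le_max_right _ _) (heq.le))
  show d.f t' ∈ ({d.f u, d.f v} : Set ℂ)
  rcases e1 with rfl | rfl
  · exact Or.inl rfl
  · exact Or.inr rfl

lemma pieces_same_d (hF : IsMulticurve F) {c c' d e e' : SimpleCurve} {p : ℂ}
    (hc : c ∈ F) (hc' : c' ∈ F) (he : IsPiece c d e) (he' : IsPiece c' d e')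
    (hp : p ∈ e.carrier) (hp' : p ∈ e'.carrier) (hne : e ≠ e') :
    c ≠ c' ∧ p ∈ e.endpoints ∧ p ∈ e'.endpoints := by
  have hcc : c ≠ c' := by
    rintro rfl
    exact hne (piece_unique he he' hp hp')
  refine ⟨hcc, ?_, ?_⟩ <;>
    [skip; skip]
  all_goals {
    first
    | exact pieces_same_d_aux hF hc hc' he he' hp hp' hcc
    | exact pieces_same_d_aux hF hc' hc he' he hp' hp (Ne.symm hcc) }

lemma piece_unique_at_end (hF : IsMulticurve F) {c c' d e e' : SimpleCurve} {p : ℂ}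
    (hc : c ∈ F) (hc' : c' ∈ F) (he : IsPiece c d e) (he' : IsPiece c' d e')
    (hp : p ∈ e.carrier) (hp' : p ∈ e'.carrier) (hend : p ∈ d.endpoints) :
    e = e' := by
  by_cases hcc : c = c'
  · subst hcc; exact piece_unique he he' hp hp'
  exfalso
  obtain ⟨u, v, huv, hs, hcomp, rfl⟩ := he
  obtain ⟨u', v', huv', hs', hcomp', rfl⟩ := he'
  obtain ⟨t, ht, rfl⟩ := hp
  obtain ⟨t', ht', ht'p⟩ := hp'
  have htt : t' = t := d.inj (hs' ht') (hs ht) ht'p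
  subst htt
  have hIS : Icc u v ⊆ S c d := by
    rw [← hcomp]; exact connectedComponentIn_subset _ _
  have hIS' : Icc u' v' ⊆ S c' d := by
    rw [← hcomp']; exact connectedComponentIn_subset _ _
  have hfin : (S c d ∩ S c' d).Finite := S_inter_finite hF hc hc' hcc
  simp only [SimpleCurve.endpoints, mem_insert_iff, mem_singleton_iff] at hend
  rcases hend with hh | hh
  · have hta : t' = d.a := d.inj (hs ht) (left_mem_Icc.mpr d.hab.le) hh
    have hu1 : u = t' := le_antisymm ht.1 (hta ▸ (hIS (left_mem_Icc.mpr huv.le)).1.1)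
    have hu2 : u' = t' := le_antisymm ht'.1 (hta ▸ (hIS' (left_mem_Icc.mpr huv'.le)).1.1)
    apply (Icc_infinite (show t' < min v v' from lt_min (hu1 ▸ huv) (hu2 ▸ huv')))
    apply hfin.subset
    intro r hr
    refine ⟨hIS ⟨hu1.symm ▸ hr.1, le_trans hr.2 (min_le_left _ _)⟩,
      hIS' ⟨hu2.symm ▸ hr.1, le_trans hr.2 (min_le_right _ _)⟩⟩
  · have htb : t' = d.b := d.inj (hs ht) (right_mem_Icc.mpr d.hab.le) hh
    have hv1 : v = t' := le_antisymm (htb ▸ (hIS (right_mem_Icc.mpr huv.le)).1.2) ht.2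
    have hv2 : v' = t' := le_antisymm (htb ▸ (hIS' (right_mem_Icc.mpr huv'.le)).1.2) ht'.2
    apply (Icc_infinite (show max u u' < t' from max_lt (hv1 ▸ huv) (hv2 ▸ huv')))
    apply hfin.subset
    intro r hr
    refine ⟨hIS ⟨le_trans (le_max_left _ _) hr.1, hv1.symm ▸ hr.2⟩,
      hIS' ⟨le_trans (le_max_right _ _) hr.1, hv2.symm ▸ hr.2⟩⟩

lemma piece_end_of_curve_end {c d e : SimpleCurve} {p : ℂ} (he : IsPiece c d e)
    (hp : p ∈ e.carrier) (hend : p ∈ d.endpoints) : p ∈ e.endpoints := by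
  obtain ⟨u, v, huv, hs, hcomp, rfl⟩ := he
  obtain ⟨t, ht, rfl⟩ := hp
  simp only [SimpleCurve.endpoints, mem_insert_iff, mem_singleton_iff] at hend
  show d.f t ∈ ({d.f u, d.f v} : Set ℂ)
  rcases hend with hh | hh
  · have hta : t = d.a := d.inj (hs ht) (left_mem_Icc.mpr d.hab.le) hh
    have hu1 : u = t := le_antisymm ht.1 (hta ▸ (hs (left_mem_Icc.mpr huv.le)).1)
    rw [hu1]
    exact Or.inl rfl
  · have htb : t = d.b := d.inj (hs ht) (right_mem_Icc.mpr d.hab.le) hh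
    have hv1 : v = t := le_antisymm (htb ▸ (hs (right_mem_Icc.mpr huv.le)).2) ht.2
    rw [hv1]
    exact Or.inr rfl

lemma H_multicurve (hF : IsMulticurve F) (hG : IsMulticurve G)
    (hFG : MCUnion G ⊆ MCUnion F) : IsMulticurve (HH F G) := by
  refine ⟨HH_finite hF hG hFG, fun p => ?_⟩
  by_cases hP : ({e ∈ HH F G | p ∈ e.carrier}).Subsingleton
  · exact Or.inl hP
  right
  rw [not_subsingleton_iff] at hP
  obtain ⟨e1, he1, e2, he2, hne⟩ := hP
  obtain ⟨he1H, hp1⟩ := he1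
  obtain ⟨he2H, hp2⟩ := he2
  obtain ⟨c1, hc1, d1, hd1, hpc1⟩ := id he1H
  obtain ⟨c2, hc2, d2, hd2, hpc2⟩ := id he2H
  have hpd1 : p ∈ d1.carrier := (isPiece_carrier_subset hpc1 hp1).2
  have hpd2 : p ∈ d2.carrier := (isPiece_carrier_subset hpc2 hp2).2
  have hpcc1 : p ∈ c1.carrier := (isPiece_carrier_subset hpc1 hp1).1
  have hpcc2 : p ∈ c2.carrier := (isPiece_carrier_subset hpc2 hp2).1
  rcases hG.2 p with hGss | ⟨g1, g2, hg1, hg2, hgne, hpe1, hpe2, hgset⟩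
  · -- Case A: all pieces through p lie over a single member of G
    have hdd : d1 = d2 := hGss ⟨hd1, hpd1⟩ ⟨hd2, hpd2⟩
    subst hdd
    obtain ⟨hcc, hep1, hep2⟩ := pieces_same_d hF hc1 hc2 hpc1 hpc2 hp1 hp2 hne
    refine ⟨e1, e2, he1H, he2H, hne, hep1, hep2, ?_⟩
    ext e
    constructor
    · rintro ⟨heH, hpe⟩
      obtain ⟨c, hc, d, hd, hpc⟩ := id heH
      have hdd1 : d = d1 :=
        hGss ⟨hd, (isPiece_carrier_subset hpc hpe).2⟩ ⟨hd1, hpd1⟩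
      subst hdd1
      by_cases h1 : c = c1
      · subst h1
        exact Or.inl (piece_unique hpc hpc1 hpe hp1)
      by_cases h2 : c = c2
      · subst h2
        exact Or.inr (piece_unique hpc hpc2 hpe hp2)
      exfalso
      have hpcc : p ∈ c.carrier := (isPiece_carrier_subset hpc hpe).1
      rcases hF.2 p with hFss | ⟨f1, f2, hf1, hf2, hfne, _, _, hfset⟩
      · exact hcc (hFss ⟨hc1, hpcc1⟩ ⟨hc2, hpcc2⟩)
      · have m : c ∈ ({f1, f2} : Set SimpleCurve) := by
          rw [← hfset]; exact ⟨hc, hpcc⟩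
        have m1 : c1 ∈ ({f1, f2} : Set SimpleCurve) := by
          rw [← hfset]; exact ⟨hc1, hpcc1⟩
        have m2 : c2 ∈ ({f1, f2} : Set SimpleCurve) := by
          rw [← hfset]; exact ⟨hc2, hpcc2⟩
        simp only [mem_insert_iff, mem_singleton_iff] at m m1 m2
        rcases m with m | m <;> rcases m1 with m1 | m1 <;> rcases m2 with m2 | m2 <;>
          first
            | exact h1 (m.trans m1.symm)
            | exact h2 (m.trans m2.symm)
            | exact hcc (m1.trans m2.symm)
    · rintro (rfl | rfl)
      · exact ⟨he1H, hp1⟩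
      · exact ⟨he2H, hp2⟩
  · -- Case B: p is a common endpoint of exactly two members of G
    have hmem : ∀ {d : SimpleCurve}, d ∈ G → p ∈ d.carrier → d = g1 ∨ d = g2 := by
      intro d hd hpd
      have : d ∈ ({g1, g2} : Set SimpleCurve) := by rw [← hgset]; exact ⟨hd, hpd⟩
      simpa using this
    have hpend : ∀ {d : SimpleCurve}, d = g1 ∨ d = g2 → p ∈ d.endpoints := by
      rintro d (rfl | rfl)
      exacts [hpe1, hpe2]
    have hd1' := hmem hd1 hpd1
    have hd2' := hmem hd2 hpd2
    have hdd : d1 ≠ d2 := by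
      rintro rfl
      exact hne (piece_unique_at_end hF hc1 hc2 hpc1 hpc2 hp1 hp2 (hpend hd1'))
    refine ⟨e1, e2, he1H, he2H, hne,
      piece_end_of_curve_end hpc1 hp1 (hpend hd1'),
      piece_end_of_curve_end hpc2 hp2 (hpend hd2'), ?_⟩
    ext e
    constructor
    · rintro ⟨heH, hpe⟩
      obtain ⟨c, hc, d, hd, hpc⟩ := id heH
      have hd' := hmem hd (isPiece_carrier_subset hpc hpe).2
      have hdor : d = d1 ∨ d = d2 := by
        rcases hd' with h | h
        · rcases hd1' with h1 | h1
          · exact Or.inl (h.trans h1.symm)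
          · rcases hd2' with h2 | h2
            · exact Or.inr (h.trans h2.symm)
            · exact absurd (h1.trans h2.symm) hdd
        · rcases hd1' with h1 | h1
          · rcases hd2' with h2 | h2
            · exact absurd (h1.trans h2.symm) hdd
            · exact Or.inr (h.trans h2.symm)
          · exact Or.inl (h.trans h1.symm)
      rcases hdor with rfl | rfl
      · exact Or.inl (piece_unique_at_end hF hc hc1 hpc hpc1 hpe hp1 (hpend hd1'))
      · exact Or.inr (piece_unique_at_end hF hc hc2 hpc hpc2 hpe hp2 (hpend hd2'))
    · rintro (rfl | rfl)
      · exact ⟨he1H, hp1⟩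
      · exact ⟨he2H, hp2⟩

lemma H_union_G (hF : IsMulticurve F) (hG : IsMulticurve G)
    (hFG : MCUnion G ⊆ MCUnion F) : MCUnion (HH F G) = MCUnion G := by
  apply subset_antisymm
  · intro p hp
    rcases mem_iUnion₂.mp hp with ⟨e, ⟨c, hc, d, hd, hpc⟩, hpe⟩
    exact mem_biUnion hd (isPiece_carrier_subset hpc hpe).2
  · intro p hp
    rcases mem_iUnion₂.mp hp with ⟨d, hd, hpd⟩
    obtain ⟨c, hc, e, he, hpe⟩ := exists_piece_G hF hFG hd hpd
    exact mem_biUnion ⟨c, hc, d, hd, he⟩ hpe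

lemma H_partition_G (hF : IsMulticurve F) (hG : IsMulticurve G)
    (hFG : MCUnion G ⊆ MCUnion F) :
    ∀ d ∈ G, ∃ H' ⊆ HH F G, d.carrier = MCUnion H' := by
  intro d hd
  refine ⟨{e | ∃ c ∈ F, IsPiece c d e}, ?_, ?_⟩
  · rintro e ⟨c, hc, he⟩
    exact ⟨c, hc, d, hd, he⟩
  · apply subset_antisymm
    · intro p hp
      obtain ⟨c, hc, e, he, hpe⟩ := exists_piece_G hF hFG hd hp
      exact mem_biUnion ⟨c, hc, he⟩ hpe
    · intro p hp
      rcases mem_iUnion₂.mp hp with ⟨e, ⟨c, hc, he⟩, hpe⟩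
      exact (isPiece_carrier_subset he hpe).2

lemma H_partition_F (hF : IsMulticurve F) (hG : IsMulticurve G)
    (hFG : MCUnion G ⊆ MCUnion F) (hGF : MCUnion F ⊆ MCUnion G) :
    ∀ c ∈ F, ∃ H' ⊆ HH F G, c.carrier = MCUnion H' := by
  intro c hc
  refine ⟨{e | ∃ d ∈ G, IsPiece c d e}, ?_, ?_⟩
  · rintro e ⟨d, hd, he⟩
    exact ⟨c, hc, d, hd, he⟩
  · apply subset_antisymm
    · intro p hp
      obtain ⟨d, hd, e, he, hpe⟩ := exists_piece_F hF hG hFG hGF hc hp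
      exact mem_biUnion ⟨d, hd, he⟩ hpe
    · intro p hp
      rcases mem_iUnion₂.mp hp with ⟨e, ⟨d, hd, he⟩, hpe⟩
      exact (isPiece_carrier_subset he hpe).1

end Main

end MCAux

/-- Multicurves with the same underlying point set are
equidecomposable. -/
theorem equidecomposable_of_same_union
    (F G : Set SimpleCurve) (hF : IsMulticurve F) (hG : IsMulticurve G)
    (h : MCUnion F = MCUnion G) :
    Equidecomposable F G := by
  have hFG : MCUnion G ⊆ MCUnion F := h.ge
  have hGF : MCUnion F ⊆ MCUnion G := h.le
  refine ⟨MCAux.HH F G, MCAux.HH F G,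
    ⟨MCAux.H_multicurve hF hG hFG, ?_, MCAux.H_partition_F hF hG hFG hGF⟩,
    ⟨MCAux.H_multicurve hF hG hFG, MCAux.H_union_G hF hG hFG,
      MCAux.H_partition_G hF hG hFG⟩,
    Equiv.refl _, fun c => ⟨IsometryEquiv.refl ℂ, by show ⇑(IsometryEquiv.refl ℂ) '' _ = _; rw [show ⇑(IsometryEquiv.refl ℂ) = id from rfl, Set.image_id]; rfl⟩⟩
  rw [MCAux.H_union_G hF hG hFG, h]
end
end

section
/- Let D be a compact set in the Euclidean plane whose circumcircle is the circle C of radius r centered at a point Z. Then Z lies in the convex hull of C ∩ D. -/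
open Metric Set

open RealInnerProductSpace

noncomputable section

/-- The circle of center `Z` and radius `r` is the circumcircle of `D`: the boundary of
the smallest closed disc containing `D`. -/
def IsCircumcircle (D : Set ℂ) (Z : ℂ) (r : ℝ) : Prop :=
  D ⊆ Metric.closedBall Z r ∧
    ∀ (Z' : ℂ) (r' : ℝ), D ⊆ Metric.closedBall Z' r' → r ≤ r'

lemma isCompact_convexHull_cpx {S : Set ℂ} (hS : IsCompact S) :
    IsCompact (convexHull ℝ S) := by
  classical
  rcases S.eq_empty_or_nonempty with rfl | ⟨p₀, hp₀⟩
  · simp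
  have hT : IsCompact (stdSimplex ℝ (Fin 3) ×ˢ Set.pi Set.univ fun _ : Fin 3 => S) :=
    (isCompact_stdSimplex ℝ (Fin 3)).prod (isCompact_univ_pi fun _ => hS)
  have hcont : Continuous (fun p : (Fin 3 → ℝ) × (Fin 3 → ℂ) => ∑ j, p.1 j • p.2 j) := by
    apply continuous_finset_sum
    intro j _
    exact ((continuous_apply j).comp continuous_fst).smul
      ((continuous_apply j).comp continuous_snd)
  have key : convexHull ℝ S = (fun p : (Fin 3 → ℝ) × (Fin 3 → ℂ) => ∑ j, p.1 j • p.2 j) ''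
      (stdSimplex ℝ (Fin 3) ×ˢ Set.pi Set.univ fun _ : Fin 3 => S) := by
    apply Set.Subset.antisymm
    · intro x hx
      obtain ⟨ι, hι, z, w, hzS, hind, hwpos, hwsum, hxeq⟩ :=
        eq_pos_convex_span_of_mem_convexHull hx
      have hcard : Fintype.card ι ≤ 3 := by
        have h1 := hind.card_le_finrank_succ
        have h2 : Module.finrank ℝ (vectorSpan ℝ (Set.range z)) ≤ Module.finrank ℝ ℂ :=
          Submodule.finrank_le _
        have h3 : Module.finrank ℝ ℂ = 2 := Complex.finrank_real_complex
        omega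
      obtain ⟨f⟩ : Nonempty (ι ↪ Fin 3) := by
        rw [Function.Embedding.nonempty_iff_card_le, Fintype.card_fin]
        exact hcard
      set z' : Fin 3 → ℂ := fun j => if h : ∃ i, f i = j then z h.choose else p₀ with hz'def
      have hz' : ∀ i, z' (f i) = z i := by
        intro i
        have h : ∃ i', f i' = f i := ⟨i, rfl⟩
        simp only [hz'def, dif_pos h]
        exact congrArg z (f.injective h.choose_spec)
      refine ⟨⟨fun j => ∑ i, if f i = j then w i else 0, z'⟩, ⟨⟨?_, ?_⟩, ?_⟩, ?_⟩
      · intro j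
        refine Finset.sum_nonneg fun i _ => ?_
        split_ifs
        · exact (hwpos i).le
        · exact le_rfl
      · rw [Finset.sum_comm]
        simpa [Finset.sum_ite_eq] using hwsum
      · intro j _
        simp only [hz'def]
        split_ifs with h
        · exact hzS ⟨h.choose, rfl⟩
        · exact hp₀
      · dsimp only
        calc ∑ j, (∑ i, if f i = j then w i else 0) • z' j
            = ∑ j, ∑ i, (if f i = j then w i else 0) • z' j := by
              simp [Finset.sum_smul]
          _ = ∑ i, ∑ j, (if f i = j then w i else 0) • z' j := Finset.sum_comm
          _ = ∑ i, ∑ j, (if f i = j then w i • z' j else 0) := by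
              simp [ite_smul]
          _ = ∑ i, w i • z' (f i) := by
              simp [Finset.sum_ite_eq]
          _ = ∑ i, w i • z i := by simp [hz']
          _ = x := hxeq
    · rintro x ⟨⟨w, g⟩, ⟨hw, hg⟩, rfl⟩
      have := Finset.univ.centerMass_mem_convexHull (fun i _ => hw.1 i)
        (by rw [hw.2]; exact one_pos) (fun i _ => hg i (Set.mem_univ i))
      rwa [Finset.centerMass_eq_of_sum_1 _ _ hw.2] at this
  rw [key]
  exact hT.image hcont

/-- The center of the circumcircle of a compact planar set `D` lies in
the convex hull of the intersection of the circumcircle with `D`. -/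
theorem circumcenter_mem_convexHull
    (D : Set ℂ) (hD : IsCompact D) (hne : D.Nonempty)
    (Z : ℂ) (r : ℝ) (hcirc : IsCircumcircle D Z r) :
    Z ∈ convexHull ℝ (Metric.sphere Z r ∩ D) := by
  classical
  obtain ⟨hsub, hmin⟩ := hcirc
  by_contra hZ
  set S := Metric.sphere Z r ∩ D with hSdef
  have hScomp : IsCompact S := hD.inter_left isClosed_sphere
  obtain ⟨x0, hx0⟩ := hne
  have hr0 : 0 ≤ r := dist_nonneg.trans (hsub hx0)
  -- r = 0 is impossible
  have hr : 0 < r := by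
    rcases hr0.lt_or_eq with h | h
    · exact h
    · exfalso
      apply hZ
      apply subset_convexHull ℝ S
      have hx0' : x0 = Z := by
        have := hsub hx0
        rw [← h, Metric.closedBall_zero] at this
        exact this
      constructor
      · simp [← h]
      · rwa [← hx0']
  -- separation
  obtain ⟨e, he, δ, hδ, hsep⟩ :
      ∃ e : ℂ, ‖e‖ ≤ 1 ∧ ∃ δ > 0, ∀ x ∈ S, δ ≤ ⟪e, x - Z⟫ := by
    rcases S.eq_empty_or_nonempty with hSe | hSne
    · exact ⟨0, by simp, 1, one_pos, by simp [hSe]⟩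
    · have hK : IsCompact (convexHull ℝ S) := isCompact_convexHull_cpx hScomp
      have hKconv : Convex ℝ (convexHull ℝ S) := convex_convexHull ℝ S
      have hKne : (convexHull ℝ S).Nonempty := hSne.mono (subset_convexHull ℝ S)
      obtain ⟨v, hvK, hvmin⟩ := exists_norm_eq_iInf_of_complete_convex hKne
        (hK.isClosed.isComplete) hKconv Z
      have hproj : ∀ w ∈ convexHull ℝ S, ⟪Z - v, w - v⟫ ≤ 0 :=
        (norm_eq_iInf_iff_real_inner_le_zero hKconv hvK).mp hvmin
      have hvZ : v ≠ Z := fun h => hZ (h ▸ hvK)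
      have hd : 0 < ‖v - Z‖ := by
        rw [norm_pos_iff, sub_ne_zero]; exact hvZ
      refine ⟨‖v - Z‖⁻¹ • (v - Z), by rw [norm_smul, norm_inv, norm_norm,
        inv_mul_cancel₀ hd.ne'], ‖v - Z‖, hd, ?_⟩
      intro x hx
      have hxK : x ∈ convexHull ℝ S := subset_convexHull ℝ S hx
      have h1 : ⟪Z - v, x - v⟫ ≤ 0 := hproj x hxK
      have h2 : ⟪v - Z, x - Z⟫ = ⟪v - Z, x - v⟫ + ⟪v - Z, v - Z⟫ := by
        rw [← inner_add_right]
        congr 1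
        ring
      have h3 : (0:ℝ) ≤ ⟪v - Z, x - v⟫ := by
        have : ⟪v - Z, x - v⟫ = -⟪Z - v, x - v⟫ := by
          rw [← inner_neg_left]; congr 1; ring
        rw [this]; linarith
      have h4 : ⟪v - Z, v - Z⟫ = ‖v - Z‖ ^ 2 := real_inner_self_eq_norm_sq _
      have h5 : ‖v - Z‖ ^ 2 ≤ ⟪v - Z, x - Z⟫ := by rw [h2, h4]; linarith
      rw [real_inner_smul_left]
      have h6 : ‖v - Z‖ * ‖v - Z‖ ≤ ⟪v - Z, x - Z⟫ := by nlinarith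
      calc ‖v - Z‖ = ‖v - Z‖⁻¹ * (‖v - Z‖ * ‖v - Z‖) := by field_simp
        _ ≤ ‖v - Z‖⁻¹ * ⟪v - Z, x - Z⟫ :=
            mul_le_mul_of_nonneg_left h6 (inv_nonneg.2 hd.le)

  -- the "deep" part of D
  set A := D ∩ {x : ℂ | ⟪e, x - Z⟫ ≤ δ / 2} with hAdef
  have hAcomp : IsCompact A := hD.inter_right <| isClosed_le
    (Continuous.inner continuous_const (continuous_id.sub continuous_const)) continuous_const
  have hAlt : ∀ x ∈ A, ‖x - Z‖ < r := by
    rintro x ⟨hxD, hxle⟩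
    have h1 : ‖x - Z‖ ≤ r := by
      have := hsub hxD
      rwa [Metric.mem_closedBall, dist_eq_norm] at this
    rcases h1.lt_or_eq with h | h
    · exact h
    · exfalso
      have hxS : x ∈ S := ⟨by simpa [Metric.mem_sphere, dist_eq_norm] using h, hxD⟩
      have := hsep x hxS
      have hxle' : ⟪e, x - Z⟫ ≤ δ / 2 := hxle
      linarith
  -- bound on A
  obtain ⟨r₁, hr₁lt, hr₁bd⟩ : ∃ r₁, r₁ < r ∧ ∀ x ∈ A, ‖x - Z‖ ≤ r₁ := by
    rcases A.eq_empty_or_nonempty with hAe | hAne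
    · exact ⟨0, hr, by simp [hAe]⟩
    · obtain ⟨x₁, hx₁A, hx₁max⟩ := hAcomp.exists_isMaxOn hAne
        ((continuous_id.sub continuous_const).norm.continuousOn)
      exact ⟨‖x₁ - Z‖, hAlt x₁ hx₁A, fun x hx => hx₁max hx⟩
  -- choose the shift
  set t := min ((r - r₁) / 2) (δ / 2) with htdef
  have ht : 0 < t := lt_min (by linarith) (by linarith)
  have ht1 : t ≤ (r - r₁) / 2 := min_le_left _ _
  have ht2 : t ≤ δ / 2 := min_le_right _ _
  set r' := max (r₁ + t) (Real.sqrt (r ^ 2 - t * δ / 2)) with hr'def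
  have hsubset : D ⊆ Metric.closedBall (Z + t • e) r' := by
    intro x hxD
    rw [Metric.mem_closedBall, dist_eq_norm]
    have hxZ' : x - (Z + t • e) = (x - Z) - t • e := by ring
    by_cases hxA : x ∈ A
    · refine le_trans ?_ (le_max_left _ _)
      rw [hxZ']
      calc ‖(x - Z) - t • e‖ ≤ ‖x - Z‖ + ‖t • e‖ := norm_sub_le _ _
        _ ≤ r₁ + t := by
            refine add_le_add (hr₁bd x hxA) ?_
            rw [norm_smul, Real.norm_of_nonneg ht.le]
            calc t * ‖e‖ ≤ t * 1 := by nlinarith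
              _ = t := mul_one t
    · refine le_trans ?_ (le_max_right _ _)
      have hinner : δ / 2 < ⟪e, x - Z⟫ := by
        by_contra h
        push_neg at h
        exact hxA ⟨hxD, h⟩
      have hxr : ‖x - Z‖ ≤ r := by
        have := hsub hxD
        rwa [Metric.mem_closedBall, dist_eq_norm] at this
      have hcs : ⟪e, x - Z⟫ ≤ ‖e‖ * ‖x - Z‖ := real_inner_le_norm e (x - Z)
      have hδ2r : δ / 2 < r := by nlinarith [norm_nonneg (x - Z), norm_nonneg e]
      rw [hxZ', Real.le_sqrt (norm_nonneg _) (by nlinarith)]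
      have hexp : ‖(x - Z) - t • e‖ ^ 2
          = ‖x - Z‖ ^ 2 - 2 * (t * ⟪e, x - Z⟫) + t ^ 2 * ‖e‖ ^ 2 := by
        rw [norm_sub_sq_real, norm_smul, Real.norm_of_nonneg ht.le, mul_pow,
          real_inner_smul_right, real_inner_comm]
      have h1 : ‖x - Z‖ ^ 2 ≤ r ^ 2 := by nlinarith [norm_nonneg (x - Z)]
      have h2 : t ^ 2 * ‖e‖ ^ 2 ≤ t * (δ / 2) := by
        have he2 : ‖e‖ ^ 2 ≤ 1 := by nlinarith [norm_nonneg e]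
        calc t ^ 2 * ‖e‖ ^ 2 ≤ t ^ 2 * 1 :=
            mul_le_mul_of_nonneg_left he2 (sq_nonneg t)
          _ = t * t := by ring
          _ ≤ t * (δ / 2) := by nlinarith
      nlinarith [mul_lt_mul_of_pos_left hinner ht]
  have hcontra := hmin (Z + t • e) r' hsubset
  have hb1 : r₁ + t < r := by linarith
  have hb2 : Real.sqrt (r ^ 2 - t * δ / 2) < r := by
    rw [Real.sqrt_lt' hr]
    nlinarith
  have : r' < r := max_lt hb1 hb2
  linarith
end
end
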